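/- Let F : J ⥤ K be a functor between small categories, and let H = ∫(F/−) with projection π : H ⥤ K and forgetful functor G : H ⥤ J as in the comma-category Grothendieck construction. Then for every category C and every functor D : J ⥤ C, the pointwise left Kan extension of D ∘ G along π exists if and only if the pointwise left Kan extension of D along F exists, and in that case they are naturally isomorphic. -/

import Mathlib

open CategoryTheory CategoryTheory.Limits

universe v u

namespace Stmt12Aux

variable {J : Type v} [SmallCategory J] {K : Type v} [SmallCategory K] (F : J ⥤ K)

/-- The inclusion of `CostructuredArrow F k` into `CostructuredArrow (Comma.snd F (𝟭 K)) k`. -/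
@[simps]
def incl (k : K) : CostructuredArrow F k ⥤ CostructuredArrow (Comma.snd F (𝟭 K)) k where
  obj X := { left := { left := X.left, right := k, hom := X.hom }, right := ⟨⟨⟩⟩, hom := 𝟙 k }
  map {X Y} a :=
    ⟨⟨a.left, 𝟙 k, by dsimp; simpa using CostructuredArrow.w a⟩, 𝟙 _, by simp; exact Category.comp_id _⟩
  map_id X := by apply CostructuredArrow.hom_ext; apply CommaMorphism.ext <;> rfl
  map_comp f g := by apply CostructuredArrow.hom_ext; apply CommaMorphism.ext <;> simp

/-- The left adjoint of `incl`. -/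
@[simps]
def retr (k : K) : CostructuredArrow (Comma.snd F (𝟭 K)) k ⥤ CostructuredArrow F k where
  obj Y := CostructuredArrow.mk (Y.left.hom ≫ Y.hom)
  map {Y Y'} m := CostructuredArrow.homMk m.left.left (by
    have h1 := m.left.w
    have h2 := CostructuredArrow.w m
    dsimp at h1 h2 ⊢
    rw [Comma.snd_map] at h2
    rw [← Category.assoc, h1, Category.assoc, h2])

/-- The adjunction `retr ⊣ incl`. -/
noncomputable def adj (k : K) : retr F k ⊣ incl F k :=
  Adjunction.mkOfHomEquiv
    { homEquiv := fun Y X =>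
        { toFun := fun g =>
            ⟨⟨g.left, Y.hom, by dsimp; exact CostructuredArrow.w g⟩, 𝟙 _, by simp; exact Category.comp_id _⟩
          invFun := fun h => CostructuredArrow.homMk h.left.left (by
            have h1 := h.left.w
            have h2 := CostructuredArrow.w h
            dsimp at h1 h2 ⊢
            have h2' : h.left.right = Y.hom := (Category.comp_id _).symm.trans h2
            exact h1.trans (congrArg (Y.left.hom ≫ ·) h2'))
          left_inv := fun g => by apply CostructuredArrow.hom_ext; rfl
          right_inv := fun h => by
            have h2 := CostructuredArrow.w h
            replace h2 : h.left.right = Y.hom := (Category.comp_id _).symm.trans h2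
            apply CostructuredArrow.hom_ext
            apply CommaMorphism.ext
            · rfl
            · exact h2.symm }
      homEquiv_naturality_left_symm := fun f g => by
        apply CostructuredArrow.hom_ext; rfl
      homEquiv_naturality_right := fun f g => by
        apply CostructuredArrow.hom_ext; apply CommaMorphism.ext
        · simp; rfl
        · simp; exact (Category.comp_id _).symm }

instance (k : K) : (incl F k).Final := Functor.final_of_adjunction (adj F k)

/-- `incl` composed with the projections agrees with the projection. -/
def inclCompIso (k : K) :
    incl F k ⋙ CostructuredArrow.proj (Comma.snd F (𝟭 K)) k ⋙ Comma.fst F (𝟭 K) ≅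
      CostructuredArrow.proj F k :=
  NatIso.ofComponents (fun X => Iso.refl _) (by intros; dsimp; simp; exact (Category.comp_id _).trans (Category.id_comp _).symm)

variable {C : Type u} [Category.{v} C] (D : J ⥤ C)

/-- Transform a natural transformation `D ⟶ F ⋙ M` into `fst ⋙ D ⟶ snd ⋙ M`. -/
@[simps]
def transβ (M : K ⥤ C) (η : D ⟶ F ⋙ M) :
    Comma.fst F (𝟭 K) ⋙ D ⟶ Comma.snd F (𝟭 K) ⋙ M where
  app X := η.app X.left ≫ M.map X.hom
  naturality X Y m := by
    have hw := m.w
    dsimp at hw ⊢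
    rw [Comma.fst_map, Comma.snd_map]
    rw [← Category.assoc, η.naturality m.left, Functor.comp_map, Category.assoc,
      ← M.map_comp, hw, M.map_comp, Category.assoc]

/-- Transform a natural transformation `fst ⋙ D ⟶ snd ⋙ E` into `D ⟶ F ⋙ E`. -/
@[simps]
def transγ (E : K ⥤ C) (ε : Comma.fst F (𝟭 K) ⋙ D ⟶ Comma.snd F (𝟭 K) ⋙ E) :
    D ⟶ F ⋙ E where
  app j := ε.app { left := j, right := F.obj j, hom := 𝟙 _ }
  naturality j j' a := by
    have := ε.naturality (X := { left := j, right := F.obj j, hom := 𝟙 _ })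
      (Y := { left := j', right := F.obj j', hom := 𝟙 _ }) ⟨a, F.map a, by simp⟩
    simpa using this

lemma key (E : K ⥤ C) (ε : Comma.fst F (𝟭 K) ⋙ D ⟶ Comma.snd F (𝟭 K) ⋙ E)
    (X : Comma F (𝟭 K)) :
    ε.app { left := X.left, right := F.obj X.left, hom := 𝟙 _ } ≫ E.map X.hom = ε.app X := by
  have := ε.naturality (X := { left := X.left, right := F.obj X.left, hom := 𝟙 _ }) (Y := X)
    ⟨𝟙 X.left, X.hom, by simp⟩
  dsimp at this
  rw [Comma.fst_map, Comma.snd_map] at this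
  refine this.symm.trans ?_
  exact (congrArg (· ≫ ε.app X) (D.map_id X.left)).trans (Category.id_comp _)

end Stmt12Aux

open Stmt12Aux in
/-- For a functor `F : J ⥤ K` between small categories, with `H = ∫(F/−) ≅ Comma F (𝟭 K)`,
projection `π = Comma.snd` and forgetful functor `G = Comma.fst`, and any functor `D : J ⥤ C`:
the pointwise left Kan extension of `D ∘ G` along `π` exists iff the pointwise left Kan
extension of `D` along `F` does, and in that case they are naturally isomorphic. -/
theorem stmt12 {J : Type v} [SmallCategory J] {K : Type v} [SmallCategory K] (F : J ⥤ K)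
    {C : Type u} [Category.{v} C] (D : J ⥤ C) :
    ((Comma.snd F (𝟭 K)).HasPointwiseLeftKanExtension (Comma.fst F (𝟭 K) ⋙ D) ↔
      F.HasPointwiseLeftKanExtension D) ∧
    ∀ (_ : (Comma.snd F (𝟭 K)).HasPointwiseLeftKanExtension (Comma.fst F (𝟭 K) ⋙ D))
      (_ : F.HasPointwiseLeftKanExtension D),
      Nonempty ((Comma.snd F (𝟭 K)).leftKanExtension (Comma.fst F (𝟭 K) ⋙ D) ≅
        F.leftKanExtension D) := by
  constructor
  · constructor
    · intro h k
      haveI : HasColimit (CostructuredArrow.proj (Comma.snd F (𝟭 K)) k ⋙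
          (Comma.fst F (𝟭 K) ⋙ D)) := h k
      haveI h' : HasColimit (incl F k ⋙ CostructuredArrow.proj (Comma.snd F (𝟭 K)) k ⋙
          Comma.fst F (𝟭 K) ⋙ D) := inferInstance
      haveI : HasColimit ((incl F k ⋙ CostructuredArrow.proj (Comma.snd F (𝟭 K)) k ⋙
          Comma.fst F (𝟭 K)) ⋙ D) := h' 
      exact hasColimit_of_iso (Functor.isoWhiskerRight (inclCompIso F k) D).symm
    · intro h k
      haveI : HasColimit (CostructuredArrow.proj F k ⋙ D) := h k
      haveI : HasColimit ((incl F k ⋙ CostructuredArrow.proj (Comma.snd F (𝟭 K)) k ⋙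
          Comma.fst F (𝟭 K)) ⋙ D) :=
        hasColimit_of_iso (Functor.isoWhiskerRight (inclCompIso F k) D)
      haveI : HasColimit (incl F k ⋙ CostructuredArrow.proj (Comma.snd F (𝟭 K)) k ⋙
          Comma.fst F (𝟭 K) ⋙ D) := this
      exact Functor.Final.hasColimit_of_comp (incl F k)
  · intro h1 h2
    haveI := h1
    haveI := h2
    set E := (Comma.snd F (𝟭 K)).leftKanExtension (Comma.fst F (𝟭 K) ⋙ D) with hE
    set M := F.leftKanExtension D with hM
    set ε := (Comma.snd F (𝟭 K)).leftKanExtensionUnit (Comma.fst F (𝟭 K) ⋙ D) with hε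
    set η := F.leftKanExtensionUnit D with hη
    set φ := E.descOfIsLeftKanExtension ε M (transβ F D M η) with hφ
    set ψ := M.descOfIsLeftKanExtension η E (transγ F D E ε) with hψ
    refine ⟨⟨φ, ψ, ?_, ?_⟩⟩
    · apply E.hom_ext_of_isLeftKanExtension ε
      ext X
      have hφ' := NatTrans.congr_app (E.descOfIsLeftKanExtension_fac ε M (transβ F D M η)) X
      have hψ' := NatTrans.congr_app
        (M.descOfIsLeftKanExtension_fac η E (transγ F D E ε)) X.left
      rw [← hφ] at hφ'
      rw [← hψ] at hψ'
      have hnat := ψ.naturality X.hom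
      dsimp at hφ' hψ' hnat ⊢
      rw [transβ_app] at hφ'
      rw [transγ_app] at hψ'
      change ε.app X ≫ φ.app X.right = _ at hφ'
      change ε.app X ≫ φ.app X.right ≫ ψ.app X.right = ε.app X ≫ 𝟙 (E.obj X.right)
      rw [← Category.assoc, hφ', Category.assoc, hnat, ← Category.assoc, hψ',
        key F D E ε X]
      exact (Category.comp_id _).symm
    · apply M.hom_ext_of_isLeftKanExtension η
      ext j
      have hψ' := NatTrans.congr_app (M.descOfIsLeftKanExtension_fac η E (transγ F D E ε)) j
      have hφ' := NatTrans.congr_app (E.descOfIsLeftKanExtension_fac ε M (transβ F D M η))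
        { left := j, right := F.obj j, hom := 𝟙 _ }
      rw [← hψ] at hψ'
      rw [← hφ] at hφ'
      dsimp at hψ' hφ' ⊢
      rw [transγ_app] at hψ'
      rw [transβ_app] at hφ'
      change _ ≫ φ.app (F.obj j) = _ at hφ'
      rw [← Category.assoc, hψ', hφ']
      simp
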